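/- Let G be a finite simple graph in which every vertex has positive degree that is edge transitive: for any two edges e_1, e_2 of G there exists a graph automorphism of G mapping e_1 onto e_2. Let λ be an eigenvalue of the normalized Laplacian L with eigenspace of dimension k, and let v_1, …, v_k be an orthonormal basis of that eigenspace. Then for every edge {x,y} of G, (1/k) Σ_{i=1}^{k} F(v_i, λ, {x,y}) = 0; that is, the edge derivative of λ with respect to any edge is zero. -/

import Mathlib

open Finset

variable {V : Type*} [Fintype V] [DecidableEq V]

/-- The normalized Laplacian `L = I - D^{-1/2} A D^{-1/2}` of a simple graph. -/
noncomputable def normLap (G : SimpleGraph V) [DecidableRel G.Adj] : Matrix V V ℝ :=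
  fun x y =>
    if x = y then 1
    else if G.Adj x y then -(1 / Real.sqrt ((G.degree x : ℝ) * (G.degree y : ℝ)))
    else 0

/-- The Aksoy–Purvine–Young edge-derivative expression
`F(v, λ, {x,y}) = (1-λ)(v_x²/d_x + v_y²/d_y) − 2 v_x v_y / √(d_x d_y)`. -/
noncomputable def edgeDeriv (G : SimpleGraph V) [DecidableRel G.Adj]
    (v : V → ℝ) (lam : ℝ) (x y : V) : ℝ :=
  (1 - lam) * (v x ^ 2 / (G.degree x : ℝ) + v y ^ 2 / (G.degree y : ℝ))
    - 2 * (v x * v y) / Real.sqrt ((G.degree x : ℝ) * (G.degree y : ℝ))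

lemma normLap_mulVec_apply (G : SimpleGraph V) [DecidableRel G.Adj] (u : V → ℝ) (x : V) :
    (normLap G).mulVec u x
      = u x - ∑ y ∈ G.neighborFinset x,
          u y / Real.sqrt ((G.degree x : ℝ) * (G.degree y : ℝ)) := by
  unfold Matrix.mulVec dotProduct normLap
  have : ∀ y : V,
      (if x = y then (1:ℝ)
        else if G.Adj x y then -(1 / Real.sqrt ((G.degree x : ℝ) * (G.degree y : ℝ)))
        else 0) * u y
      = (if x = y then u y else 0)
        + (if G.Adj x y then -(u y / Real.sqrt ((G.degree x : ℝ) * (G.degree y : ℝ))) else 0) := by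
    intro y
    by_cases h : x = y
    · subst h
      simp [G.loopless.irrefl x]
    · by_cases h2 : G.Adj x y <;> simp [h, h2] <;> ring
  simp only [this, Finset.sum_add_distrib, Finset.sum_ite_eq, Finset.mem_univ, if_true]
  rw [SimpleGraph.neighborFinset_eq_filter, Finset.sum_filter]
  have h2 : ∀ w : V, (if G.Adj x w then -(u w / Real.sqrt ((G.degree x : ℝ) * (G.degree w : ℝ))) else 0)
      = -(if G.Adj x w then u w / Real.sqrt ((G.degree x : ℝ) * (G.degree w : ℝ)) else 0) := by
    intro w; split <;> simp
  simp only [h2, Finset.sum_neg_distrib, sub_eq_add_neg]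

lemma iso_degree (G : SimpleGraph V) [DecidableRel G.Adj] (φ : G ≃g G) (a : V) :
    G.degree (φ a) = G.degree a := by
  rw [← SimpleGraph.card_neighborSet_eq_degree, ← SimpleGraph.card_neighborSet_eq_degree]
  exact (Fintype.card_congr (φ.mapNeighborSet a)).symm

theorem edge_transitive_edge_derivative_zero
    (G : SimpleGraph V) [DecidableRel G.Adj]
    (hdeg : ∀ z : V, 0 < G.degree z)
    (hET : ∀ ⦃a b c d : V⦄, G.Adj a b → G.Adj c d →
      ∃ φ : G ≃g G, s(φ a, φ b) = s(c, d))
    (lam : ℝ) (k : ℕ) (hk : 0 < k)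
    (v : Fin k → V → ℝ)
    (horth : ∀ i j, (∑ z, v i z * v j z) = if i = j then 1 else 0)
    (heig : ∀ i, (normLap G).mulVec (v i) = lam • v i)
    (hspan : ∀ u : V → ℝ, (normLap G).mulVec u = lam • u →
      u ∈ Submodule.span ℝ (Set.range v))
    (x y : V) (hxy : G.Adj x y) :
    (1 / (k : ℝ)) * ∑ i, edgeDeriv G (v i) lam x y = 0 := by
  classical
  have hdR : ∀ z : V, (0:ℝ) < (G.degree z : ℝ) := fun z => by exact_mod_cast hdeg z
  have hdne : ∀ z : V, ((G.degree z : ℝ)) ≠ 0 := fun z => ne_of_gt (hdR z)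
  -- pointwise eigen equation
  have heig' : ∀ (i : Fin k) (a : V), (∑ w ∈ G.neighborFinset a,
      v i w / Real.sqrt ((G.degree a : ℝ) * (G.degree w : ℝ))) = (1 - lam) * v i a := by
    intro i a
    have h := congrFun (heig i) a
    rw [normLap_mulVec_apply] at h
    simp only [Pi.smul_apply, smul_eq_mul] at h
    linarith
  -- composing with an automorphism preserves the eigen equation
  have hcomp : ∀ (φ : G ≃g G) (i : Fin k),
      (normLap G).mulVec (fun z => v i (φ z)) = lam • (fun z => v i (φ z)) := by
    intro φ i
    funext a
    rw [normLap_mulVec_apply]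
    have hre : (∑ w ∈ G.neighborFinset a,
        v i (φ w) / Real.sqrt ((G.degree a : ℝ) * (G.degree w : ℝ)))
        = ∑ u ∈ G.neighborFinset (φ a),
            v i u / Real.sqrt ((G.degree (φ a) : ℝ) * (G.degree u : ℝ)) := by
      refine Finset.sum_equiv φ.toEquiv (fun w => ?_) (fun w hw => ?_)
      · simp only [SimpleGraph.mem_neighborFinset]
        exact (φ.map_adj_iff).symm
      · rw [show (φ.toEquiv w) = φ w from rfl, iso_degree G φ a, iso_degree G φ w]
    rw [hre]
    have h := heig' i (φ a)
    simp only [Pi.smul_apply, smul_eq_mul]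
    linarith
  -- expansion in the basis
  have hexp : ∀ (φ : G ≃g G) (i : Fin k), ∃ c : Fin k → ℝ, ∀ z, v i (φ z) = ∑ j, c j * v j z := by
    intro φ i
    have hm := hspan _ (hcomp φ i)
    obtain ⟨c, hc⟩ := (Submodule.mem_span_range_iff_exists_fun ℝ).1 hm
    refine ⟨c, fun z => ?_⟩
    have := congrFun hc z
    simp only [Finset.sum_apply, Pi.smul_apply, smul_eq_mul] at this
    exact this.symm
  -- invariance of the projection kernel
  have hS : ∀ (φ : G ≃g G) (a b : V),
      (∑ i, v i (φ a) * v i (φ b)) = ∑ i, v i a * v i b := by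
    intro φ a b
    choose c hc using hexp φ
    have hrow : ∀ i j : Fin k, (∑ l, c i l * c j l) = if i = j then 1 else 0 := by
      intro i j
      have h2 : (∑ z, v i (φ z) * v j (φ z)) = ∑ l, c i l * c j l :=
        calc (∑ z, v i (φ z) * v j (φ z))
            = ∑ z, (∑ p, c i p * v p z) * (∑ q, c j q * v q z) := by simp only [hc]
          _ = ∑ z, ∑ p, ∑ q, (c i p * c j q) * (v p z * v q z) := by
              refine Finset.sum_congr rfl fun z _ => ?_
              rw [Finset.sum_mul_sum]
              exact Finset.sum_congr rfl fun p _ => Finset.sum_congr rfl fun q _ => by ring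
          _ = ∑ p, ∑ q, (c i p * c j q) * (∑ z, v p z * v q z) := by
              rw [Finset.sum_comm]
              refine Finset.sum_congr rfl fun p _ => ?_
              rw [Finset.sum_comm]
              exact Finset.sum_congr rfl fun q _ => (Finset.mul_sum _ _ _).symm
          _ = ∑ l, c i l * c j l := by
              simp [horth, mul_ite]
      rw [← h2, ← horth i j]
      exact Fintype.sum_equiv φ.toEquiv _ _ (fun z => rfl)
    set M : Matrix (Fin k) (Fin k) ℝ := Matrix.of c with hM
    have hMMt : M * Matrix.transpose M = 1 := by
      ext i j
      simp [Matrix.mul_apply, Matrix.one_apply, hrow, hM]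
    have hMtM : Matrix.transpose M * M = 1 := mul_eq_one_comm.mp hMMt
    have hcol : ∀ p q : Fin k, (∑ l, c l p * c l q) = if p = q then 1 else 0 := by
      intro p q
      have h2 := congrFun (congrFun hMtM p) q
      simpa [Matrix.mul_apply, Matrix.one_apply, hM, mul_comm] using h2
    calc (∑ i, v i (φ a) * v i (φ b))
        = ∑ i, (∑ p, c i p * v p a) * (∑ q, c i q * v q b) := by
          simp only [hc]
      _ = ∑ i, ∑ p, ∑ q, (c i p * c i q) * (v p a * v q b) := by
          refine Finset.sum_congr rfl fun i _ => ?_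
          rw [Finset.sum_mul_sum]
          exact Finset.sum_congr rfl fun p _ => Finset.sum_congr rfl fun q _ => by ring
      _ = ∑ p, ∑ q, (∑ i, c i p * c i q) * (v p a * v q b) := by
          rw [Finset.sum_comm]
          refine Finset.sum_congr rfl fun p _ => ?_
          rw [Finset.sum_comm]
          exact Finset.sum_congr rfl fun q _ => (Finset.sum_mul _ _ _).symm
      _ = ∑ p, v p a * v p b := by
          simp [hcol, ite_mul]
  -- the sum of edge derivatives as a function of the kernel
  have sum_ed : ∀ a b : V, (∑ i, edgeDeriv G (v i) lam a b)
      = (1 - lam) * ((∑ i, v i a * v i a) / (G.degree a : ℝ)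
          + (∑ i, v i b * v i b) / (G.degree b : ℝ))
        - 2 * (∑ i, v i a * v i b) / Real.sqrt ((G.degree a : ℝ) * (G.degree b : ℝ)) := by
    intro a b
    rw [show (∑ i, edgeDeriv G (v i) lam a b)
        = ∑ i, ((1 - lam) * ((v i a * v i a) / (G.degree a : ℝ))
            + (1 - lam) * ((v i b * v i b) / (G.degree b : ℝ))
            - 2 * ((v i a * v i b) / Real.sqrt ((G.degree a : ℝ) * (G.degree b : ℝ)))) from
      Finset.sum_congr rfl fun i _ => by unfold edgeDeriv; ring]
    rw [Finset.sum_sub_distrib, Finset.sum_add_distrib, ← Finset.mul_sum, ← Finset.mul_sum,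
      ← Finset.mul_sum, ← Finset.sum_div, ← Finset.sum_div, ← Finset.sum_div]
    ring
  have ed_symm : ∀ (w : V → ℝ) (a b : V), edgeDeriv G w lam a b = edgeDeriv G w lam b a := by
    intro w a b
    unfold edgeDeriv
    rw [mul_comm ((G.degree a : ℝ)) ((G.degree b : ℝ))]
    ring
  -- the sum of edge derivatives is the same for every edge
  have hconst : ∀ a b : V, G.Adj a b →
      (∑ i, edgeDeriv G (v i) lam a b) = ∑ i, edgeDeriv G (v i) lam x y := by
    intro a b hab
    obtain ⟨φ, hφ⟩ := hET hab hxy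
    have key : (∑ i, edgeDeriv G (v i) lam a b) = ∑ i, edgeDeriv G (v i) lam (φ a) (φ b) := by
      rw [sum_ed a b, sum_ed (φ a) (φ b), hS φ a b, hS φ a a, hS φ b b,
        iso_degree G φ a, iso_degree G φ b]
    rw [key]
    rw [Sym2.eq_iff] at hφ
    rcases hφ with ⟨h1, h2⟩ | ⟨h1, h2⟩
    · rw [h1, h2]
    · rw [h1, h2]
      exact Finset.sum_congr rfl fun i _ => ed_symm (v i) y x
  -- swapping the roles of the two endpoints in a double sum over adjacent pairs
  have hswap : ∀ g : V → ℝ, (∑ a, ∑ b ∈ G.neighborFinset a, g b)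
      = ∑ a, ∑ b ∈ G.neighborFinset a, g a := by
    intro g
    simp only [SimpleGraph.neighborFinset_eq_filter, Finset.sum_filter]
    rw [Finset.sum_comm]
    refine Finset.sum_congr rfl fun a _ => Finset.sum_congr rfl fun b _ => ?_
    exact if_congr (G.adj_comm b a) rfl rfl
  -- the total sum over all ordered adjacent pairs vanishes
  have htot : (∑ a, ∑ b ∈ G.neighborFinset a, ∑ i, edgeDeriv G (v i) lam a b) = 0 := by
    have hswap3 : ∀ a : V, (∑ b ∈ G.neighborFinset a, ∑ i, edgeDeriv G (v i) lam a b)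
        = ∑ i, ∑ b ∈ G.neighborFinset a, edgeDeriv G (v i) lam a b := fun a => Finset.sum_comm
    simp only [hswap3]
    rw [Finset.sum_comm]
    refine Finset.sum_eq_zero fun i _ => ?_
    have hsq : (∑ a, v i a ^ 2) = 1 := by
      have h := horth i i
      rw [if_pos rfl] at h
      rw [← h]
      exact Finset.sum_congr rfl fun a _ => pow_two (v i a)
    have expand : ∀ a b : V, edgeDeriv G (v i) lam a b
        = (1 - lam) * (v i a ^ 2 / (G.degree a : ℝ))
          + (1 - lam) * (v i b ^ 2 / (G.degree b : ℝ))
          - 2 * ((v i a * v i b) / Real.sqrt ((G.degree a : ℝ) * (G.degree b : ℝ))) := by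
      intro a b
      unfold edgeDeriv
      ring
    simp only [expand, Finset.sum_sub_distrib, Finset.sum_add_distrib]
    have hA : (∑ a, ∑ _b ∈ G.neighborFinset a, (1 - lam) * (v i a ^ 2 / (G.degree a : ℝ)))
        = 1 - lam := by
      have : ∀ a : V, (∑ _b ∈ G.neighborFinset a, (1 - lam) * (v i a ^ 2 / (G.degree a : ℝ)))
          = (1 - lam) * v i a ^ 2 := by
        intro a
        rw [Finset.sum_const, SimpleGraph.card_neighborFinset_eq_degree, nsmul_eq_mul]
        field_simp
        rw [mul_assoc]; exact mul_div_cancel_left₀ _ (hdne a)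
      rw [Finset.sum_congr rfl fun a _ => this a, ← Finset.mul_sum, hsq, mul_one]
    have hB : (∑ a, ∑ b ∈ G.neighborFinset a, (1 - lam) * (v i b ^ 2 / (G.degree b : ℝ)))
        = 1 - lam := by
      rw [hswap (fun z => (1 - lam) * (v i z ^ 2 / (G.degree z : ℝ)))]
      exact hA
    have hC : (∑ a, ∑ b ∈ G.neighborFinset a,
        2 * ((v i a * v i b) / Real.sqrt ((G.degree a : ℝ) * (G.degree b : ℝ))))
        = 2 * (1 - lam) := by
      have : ∀ a : V, (∑ b ∈ G.neighborFinset a,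
          2 * ((v i a * v i b) / Real.sqrt ((G.degree a : ℝ) * (G.degree b : ℝ))))
          = 2 * (1 - lam) * v i a ^ 2 := by
        intro a
        have h1 : ∀ b : V, 2 * ((v i a * v i b) / Real.sqrt ((G.degree a : ℝ) * (G.degree b : ℝ)))
            = (2 * v i a) * (v i b / Real.sqrt ((G.degree a : ℝ) * (G.degree b : ℝ))) := by
          intro b; ring
        rw [Finset.sum_congr rfl fun b _ => h1 b, ← Finset.mul_sum, heig' i a]
        ring
      rw [Finset.sum_congr rfl fun a _ => this a, ← Finset.mul_sum, hsq, mul_one]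
    rw [hA, hB, hC]
    ring
  -- conclude
  have hcount : (∑ a, ∑ b ∈ G.neighborFinset a, ∑ i, edgeDeriv G (v i) lam a b)
      = (∑ a, (G.degree a : ℝ)) * (∑ i, edgeDeriv G (v i) lam x y) := by
    rw [Finset.sum_mul]
    refine Finset.sum_congr rfl fun a _ => ?_
    rw [Finset.sum_congr rfl fun b hb => hconst a b ((SimpleGraph.mem_neighborFinset _ _ _).1 hb),
      Finset.sum_const, SimpleGraph.card_neighborFinset_eq_degree, nsmul_eq_mul]
  have hpos : (0:ℝ) < ∑ a, (G.degree a : ℝ) :=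
    Finset.sum_pos (fun a _ => hdR a) ⟨x, Finset.mem_univ x⟩
  have hzero : (∑ i, edgeDeriv G (v i) lam x y) = 0 := by
    have h0 := htot
    rw [hcount] at h0
    exact (mul_eq_zero.mp h0).resolve_left (ne_of_gt hpos)
  rw [hzero, mul_zero]
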